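/- Let (λ_j^{(n)})_{j=1}^p be sequences of nonnegative reals (eigenvalue estimates, ordered decreasingly λ_1^{(n)} ≥ ... ≥ λ_p^{(n)}) and let λ_1 ≥ ... ≥ λ_q > 0 = λ_{q+1} = ... = λ_p be the limits, with |λ_j^{(n)} - λ_j| = O(n^{-1/2}) for j ≤ q and λ_j^{(n)} = O(n^{-1}) for j > q, where 1 ≤ q ≤ p-1. Set c_n = log n / n and r_j^{(n)} = ((λ_{j+1}^{(n)})^2 + c_n)/((λ_j^{(n)})^2 + c_n) for 1 ≤ j ≤ p-1. Then for all sufficiently large n, the index minimizing j ↦ r_j^{(n)} over 1 ≤ j ≤ p-1 equals q. -/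

import Mathlib

open Finset Filter

/-- RERE consistency (deterministic core): with ridge `c_n = log n / n`, the ridge-type
eigenvalue ratio `r_j^{(n)}` is uniquely minimized at `j = q` for all large `n`. -/
theorem stmt_5 {p q : ℕ} (hq1 : 1 ≤ q) (hqp : q ≤ p - 1)
    (lam : ℕ → ℕ → ℝ) (L : ℕ → ℝ)
    (hnonneg : ∀ n, ∀ j ∈ Finset.Icc 1 p, 0 ≤ lam n j)
    (hdecr : ∀ n, ∀ j ∈ Finset.Icc 1 (p - 1), lam n (j + 1) ≤ lam n j)
    (hLdecr : ∀ j ∈ Finset.Icc 1 (p - 1), L (j + 1) ≤ L j)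
    (hLpos : 0 < L q)
    (hLzero : ∀ j, q < j → j ≤ p → L j = 0)
    (hOhalf : ∃ Cst > 0, ∀ n ≥ 1, ∀ j, 1 ≤ j → j ≤ q →
      |lam n j - L j| ≤ Cst / Real.sqrt n)
    (hOone : ∃ Cst > 0, ∀ n ≥ 1, ∀ j, q < j → j ≤ p → lam n j ≤ Cst / n)
    (c : ℕ → ℝ) (hc : ∀ n, c n = Real.log n / n)
    (r : ℕ → ℕ → ℝ)
    (hr : ∀ n, ∀ j ∈ Finset.Icc 1 (p - 1),
      r n j = ((lam n (j + 1)) ^ 2 + c n) / ((lam n j) ^ 2 + c n)) :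
    ∃ N : ℕ, ∀ n ≥ N, ∀ j ∈ Finset.Icc 1 (p - 1), j ≠ q → r n q < r n j := by
  obtain ⟨C1, hC1, hO1⟩ := hOhalf
  obtain ⟨C2, hC2, hO2⟩ := hOone
  have hp2 : 2 ≤ p := by omega
  have hqp' : q + 1 ≤ p := by omega
  -- L is antitone on [1, p]
  have hLmono : ∀ i, 1 ≤ i → ∀ j, i ≤ j → j ≤ p → L j ≤ L i := by
    intro i hi j hij
    induction j, hij using Nat.le_induction with
    | base => intro _; exact le_refl _
    | succ j hij ih =>
      intro hjp
      exact le_trans (hLdecr j (mem_Icc.mpr ⟨by omega, by omega⟩)) (ih (by omega))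
  have hLpos' : ∀ j, 1 ≤ j → j ≤ q → 0 < L j := fun j h1 h2 =>
    lt_of_lt_of_le hLpos (hLmono j h1 q h2 (by omega))
  -- c n → 0
  have hcz : Tendsto c atTop (nhds 0) := by
    have h1 : Tendsto (fun x : ℝ => Real.log x / x) atTop (nhds 0) :=
      Real.isLittleO_log_id_atTop.tendsto_div_nhds_zero
    have := h1.comp tendsto_natCast_atTop_atTop (α := ℕ)
    refine Tendsto.congr (fun n => ?_) this
    simp [hc]
  -- lam n j → L j for 1 ≤ j ≤ q
  have hsq : Tendsto Real.sqrt atTop atTop := by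
    have : Real.sqrt = fun x : ℝ => x ^ (1/2 : ℝ) := funext fun x => Real.sqrt_eq_rpow x
    rw [this]
    exact tendsto_rpow_atTop (by norm_num)
  have hlamj : ∀ j, 1 ≤ j → j ≤ q → Tendsto (fun n => lam n j) atTop (nhds (L j)) := by
    intro j h1 h2
    have h0 : Tendsto (fun n : ℕ => C1 / Real.sqrt n) atTop (nhds 0) :=
      Tendsto.div_atTop tendsto_const_nhds (hsq.comp tendsto_natCast_atTop_atTop)
    have hev : ∀ᶠ n : ℕ in atTop, ‖lam n j - L j‖ ≤ C1 / Real.sqrt n := by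
      filter_upwards [eventually_ge_atTop 1] with n hn
      simpa [Real.norm_eq_abs] using hO1 n hn j h1 h2
    have := squeeze_zero_norm' hev h0
    have h3 := this.add_const (L j)
    simpa using h3
  -- lam n j → 0 for q < j ≤ p
  have hlam0 : ∀ j, q < j → j ≤ p → Tendsto (fun n => lam n j) atTop (nhds 0) := by
    intro j h1 h2
    refine squeeze_zero' ?_ ?_ (tendsto_const_div_atTop_nhds_zero_nat C2)
    · filter_upwards with n
      exact hnonneg n j (mem_Icc.mpr ⟨by omega, h2⟩)
    · filter_upwards [eventually_ge_atTop 1] with n hn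
      exact hO2 n hn j h1 h2
  -- r n q → 0
  have hqmem : q ∈ Finset.Icc 1 (p - 1) := mem_Icc.mpr ⟨hq1, hqp⟩
  have hrq0 : Tendsto (fun n => r n q) atTop (nhds 0) := by
    have hnum : Tendsto (fun n => (lam n (q + 1)) ^ 2 + c n) atTop (nhds 0) := by
      have := ((hlam0 (q + 1) (by omega) hqp').pow 2).add hcz
      simpa using this
    have hden : Tendsto (fun n => (lam n q) ^ 2 + c n) atTop (nhds (L q ^ 2)) := by
      have := ((hlamj q hq1 le_rfl).pow 2).add hcz
      simpa using this
    have hne : L q ^ 2 ≠ 0 := by positivity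
    have := hnum.div hden hne
    refine Tendsto.congr (fun n => (hr n q hqmem).symm) ?_
    simpa [Pi.div_def] using this
  -- key eventual statement per j
  have hnlog : Tendsto (fun n : ℕ => (n : ℝ) * Real.log n) atTop atTop :=
    Tendsto.atTop_mul_atTop₀ tendsto_natCast_atTop_atTop
      (Real.tendsto_log_atTop.comp tendsto_natCast_atTop_atTop)
  have key : ∀ j ∈ Finset.Icc 1 (p - 1), ∀ᶠ n in atTop, j ≠ q → r n q < r n j := by
    intro j hj
    obtain ⟨hj1, hj2⟩ := mem_Icc.mp hj
    rcases lt_trichotomy j q with h | h | h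
    · -- j < q : r n j → L(j+1)²/L j² > 0
      have hj1q : j + 1 ≤ q := h
      have hrj : Tendsto (fun n => r n j) atTop (nhds (L (j + 1) ^ 2 / L j ^ 2)) := by
        have hnum := ((hlamj (j + 1) (by omega) hj1q).pow 2).add hcz
        have hden := ((hlamj j hj1 (by omega)).pow 2).add hcz
        have hne : L j ^ 2 + 0 ≠ 0 := by
          have := hLpos' j hj1 (by omega); positivity
        have := hnum.div hden hne
        refine Tendsto.congr (fun n => (hr n j hj).symm) ?_
        simpa [Pi.div_def] using this
      have hpos : (0 : ℝ) < L (j + 1) ^ 2 / L j ^ 2 := by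
        have h1 := hLpos' (j + 1) (by omega) hj1q
        have h2 := hLpos' j hj1 (by omega)
        positivity
      filter_upwards [hrq0.eventually_lt hrj hpos] with n hn _
      exact hn
    · filter_upwards with n hn; exact absurd h hn
    · -- j > q : r n j ≥ 2/3 eventually
      have hjp : j + 1 ≤ p := by omega
      have hlb : ∀ᶠ n in atTop, (2 : ℝ) / 3 ≤ r n j := by
        filter_upwards [eventually_ge_atTop 2, hnlog.eventually_ge_atTop (2 * C2 ^ 2)]
          with n hn2 hnl
        have hn1 : (1 : ℝ) < n := by exact_mod_cast Nat.lt_of_lt_of_le one_lt_two hn2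
        have hnpos : (0 : ℝ) < n := by linarith
        have hlogpos : 0 < Real.log n := Real.log_pos hn1
        have hcpos : 0 < c n := by rw [hc]; positivity
        have hlamle : lam n j ≤ C2 / n := hO2 n (by omega) j h (by omega)
        have hlamnn : 0 ≤ lam n j := hnonneg n j (mem_Icc.mpr ⟨by omega, by omega⟩)
        have hb : (lam n j) ^ 2 ≤ c n / 2 := by
          have h1 : (lam n j) ^ 2 ≤ (C2 / n) ^ 2 := by
            apply pow_le_pow_left₀ hlamnn hlamle
          have h2 : (C2 / n) ^ 2 ≤ c n / 2 := by
            rw [hc, div_pow, div_le_div_iff₀ (by positivity) (by norm_num : (0:ℝ) < 2)]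
            have : (n : ℝ) ^ 2 = n * n := sq (n : ℝ) ▸ by ring
            calc C2 ^ 2 * 2 = 2 * C2 ^ 2 := by ring
              _ ≤ n * Real.log n := hnl
              _ ≤ Real.log n / n * (n : ℝ) ^ 2 := by
                  rw [div_mul_eq_mul_div, le_div_iff₀ hnpos]; ring_nf; rfl
          linarith
        have hnumge : c n ≤ (lam n (j + 1)) ^ 2 + c n := by
          have : 0 ≤ (lam n (j + 1)) ^ 2 := sq_nonneg _
          linarith
        have hdenle : (lam n j) ^ 2 + c n ≤ 3 / 2 * c n := by linarith
        have hdenpos : 0 < (lam n j) ^ 2 + c n := by positivity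
        rw [hr n j hj]
        calc (2 : ℝ) / 3 = c n / (3 / 2 * c n) := by
              field_simp
          _ ≤ ((lam n (j + 1)) ^ 2 + c n) / ((lam n j) ^ 2 + c n) := by
              apply div_le_div₀ (by positivity) hnumge hdenpos hdenle
      filter_upwards [hlb, hrq0.eventually_lt_const (by norm_num : (0:ℝ) < 2/3)]
        with n h1 h2 _
      linarith
  have := (eventually_all_finset (Finset.Icc 1 (p - 1))).mpr key
  rw [eventually_atTop] at this
  obtain ⟨N, hN⟩ := this
  exact ⟨N, fun n hn j hj hne => hN n hn j hj hne⟩
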